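/- Under the blanket assumptions, let x̄ ∈ dom(∂F) and suppose g* satisfies the calmness condition on dom(g*). If Q satisfies the KL property with exponent θ ∈ [0,1) at (x̄, ȳ) for every ȳ ∈ ∂g(x̄), then F satisfies the KL property with the same exponent θ at x̄. -/

import Mathlib

open Filter Topology Set
open scoped RealInnerProductSpace Pointwise NNReal

noncomputable section

namespace Paper

variable {E : Type*} [NormedAddCommGroup E] [InnerProductSpace ℝ E]

/-- The effective domain of an extended-real-valued function. -/
def edom (φ : E → EReal) : Set E := {x | φ x ≠ ⊤}

/-- A function with values in `(-∞, +∞]` is proper if it is not identically `+∞`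
and never takes the value `-∞`. -/
def Proper (φ : E → EReal) : Prop := (∃ x, φ x ≠ ⊤) ∧ ∀ x, φ x ≠ ⊥

/-- The Fréchet subdifferential of `φ` at `x`. -/
def frSubdiff (φ : E → EReal) (x : E) : Set E :=
  {y | φ x ≠ ⊤ ∧ 0 ≤ Filter.liminf
      (fun z : E => (φ z - φ x - ((⟪y, z - x⟫ : ℝ) : EReal)) * ((‖z - x‖⁻¹ : ℝ) : EReal))
      (𝓝[≠] x)}

/-- The limiting (Mordukhovich) subdifferential of `φ` at `x`. -/
def limSubdiff (φ : E → EReal) (x : E) : Set E :=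
  {y | ∃ u v : ℕ → E,
      Tendsto u atTop (𝓝 x) ∧ Tendsto (fun k => φ (u k)) atTop (𝓝 (φ x)) ∧
      (∀ k, v k ∈ frSubdiff φ (u k)) ∧ Tendsto v atTop (𝓝 y)}

/-- The convex subdifferential of a real-valued function. -/
def cvxSubdiff (g : E → ℝ) (x : E) : Set E :=
  {y | ∀ z, g x + ⟪y, z - x⟫ ≤ g z}

/-- The convex subdifferential of an extended-real-valued function. -/
def cvxSubdiffE (φ : E → EReal) (x : E) : Set E :=
  {y | ∀ z, φ x + ((⟪y, z - x⟫ : ℝ) : EReal) ≤ φ z}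

/-- The Fenchel conjugate of an extended-real-valued function. -/
def fconjE (φ : E → EReal) : E → EReal :=
  fun y => ⨆ x : E, (((⟪x, y⟫ : ℝ) : EReal) - φ x)

/-- The Fenchel conjugate of a real-valued function. -/
def fconj (g : E → ℝ) : E → EReal := fconjE (fun x => ((g x : ℝ) : EReal))

/-- `φ` satisfies the calmness condition at `x` relative to `A`. -/
def CalmAt (φ : E → EReal) (x : E) (A : Set E) : Prop :=
  ∃ κ : ℝ, 0 < κ ∧ ∃ B ∈ 𝓝 x, ∀ u ∈ B ∩ A,
    φ u ≤ φ x + ((κ * ‖u - x‖ : ℝ) : EReal) ∧ φ x ≤ φ u + ((κ * ‖u - x‖ : ℝ) : EReal)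

/-- `φ` satisfies the calmness condition on `A`. -/
def CalmOn (φ : E → EReal) (A : Set E) : Prop := ∀ x ∈ A, CalmAt φ x A

/-- The Kurdyka–Łojasiewicz property of `φ` at `x`. -/
def KLAt (φ : E → EReal) (x : E) : Prop :=
  ∃ ε > (0 : ℝ), ∃ δ > (0 : ℝ), ∃ ϕ ϕ' : ℝ → ℝ,
    ϕ 0 = 0 ∧ ContinuousOn ϕ (Set.Ico 0 ε) ∧ ConcaveOn ℝ (Set.Ico 0 ε) ϕ ∧
    (∀ s ∈ Set.Ioo (0 : ℝ) ε, HasDerivAt ϕ (ϕ' s) s) ∧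
    ContinuousOn ϕ' (Set.Ioo 0 ε) ∧ (∀ s ∈ Set.Ioo (0 : ℝ) ε, 0 < ϕ' s) ∧
    ∀ z ∈ Metric.ball x δ, φ x < φ z → φ z < φ x + (ε : EReal) →
      1 ≤ ENNReal.ofReal (ϕ' ((φ z).toReal - (φ x).toReal)) *
        EMetric.infEdist (0 : E) (limSubdiff φ z)

/-- The KL property of `φ` at `x` with exponent `θ`. -/
def KLExpAt (φ : E → EReal) (x : E) (θ : ℝ) : Prop :=
  ∃ c > (0 : ℝ), ∃ ε > (0 : ℝ), ∃ δ > (0 : ℝ),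
    ∀ z ∈ Metric.ball x δ, φ x < φ z → φ z < φ x + (ε : EReal) →
      ENNReal.ofReal (c * ((φ z).toReal - (φ x).toReal) ^ θ) ≤
        EMetric.infEdist (0 : E) (limSubdiff φ z)

/-- The (possibly multivalued) proximity operator of `φ`. -/
def proxSet (φ : E → EReal) (u : E) : Set E :=
  {z | ∀ w, φ z + ((‖z - u‖ ^ 2 / 2 : ℝ) : EReal) ≤ φ w + ((‖w - u‖ ^ 2 / 2 : ℝ) : EReal)}

/-- A positive scaling of an extended-real-valued function. -/
def scaleE (α : ℝ) (φ : E → EReal) : E → EReal := fun x => ((α : ℝ) : EReal) * φ x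

/-- `h` is locally Lipschitz differentiable on `s`. -/
def LocLipGradOn [CompleteSpace E] (h : E → ℝ) (s : Set E) : Prop :=
  (∀ x ∈ s, DifferentiableAt ℝ h x) ∧
  ∀ x ∈ s, ∃ U ∈ 𝓝 x, ∃ L : ℝ, ∀ u ∈ U ∩ s, ∀ v ∈ U ∩ s,
    ‖gradient h u - gradient h v‖ ≤ L * ‖u - v‖

/-- The numerator `ζ = f + h`. -/
def zeta (f : E → EReal) (h : E → ℝ) (x : E) : EReal := f x + ((h x : ℝ) : EReal)

/-- `η(x,y) = ⟨x,y⟩ − g^*(y)`. -/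
def eta (g : E → ℝ) (x y : E) : EReal := ((⟪x, y⟫ : ℝ) : EReal) - fconj g y

/-- The extended objective of the fractional problem. -/
def Ffun (f : E → EReal) (g h : E → ℝ) (x : E) : EReal :=
  if g x ≠ 0 ∧ f x ≠ ⊤ then ((((f x).toReal + h x) / g x : ℝ) : EReal) else ⊤

/-- The extended objective of the reformulated problem. -/
def Qfun (f : E → EReal) (g h : E → ℝ) (x y : E) : EReal :=
  if f x ≠ ⊤ ∧ 0 < eta g x y then
    ((((f x).toReal + h x) / (eta g x y).toReal : ℝ) : EReal) else ⊤

/-- Pack a pair into the `ℓ²` product space. -/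
def mk2 (x y : E) : WithLp 2 (E × E) := (WithLp.equiv 2 (E × E)).symm (x, y)

def pr1 (p : WithLp 2 (E × E)) : E := (WithLp.equiv 2 (E × E) p).1

def pr2 (p : WithLp 2 (E × E)) : E := (WithLp.equiv 2 (E × E) p).2

/-- `Q` as a function on the `ℓ²` product space. -/
def Qpair (f : E → EReal) (g h : E → ℝ) (p : WithLp 2 (E × E)) : EReal :=
  Qfun f g h (pr1 p) (pr2 p)

/-- The blanket assumptions of the paper. -/
structure Blanket [CompleteSpace E] (f : E → EReal) (g h : E → ℝ) : Prop where
  f_proper : Proper f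
  f_lsc : LowerSemicontinuous f
  f_cont : ContinuousOn f (edom f)
  f_bddBelow : ∃ m : ℝ, ∀ x, (m : EReal) ≤ f x
  h_lsc : LowerSemicontinuous h
  h_diff : LocLipGradOn h {x | g x ≠ 0}
  g_convex : ConvexOn ℝ Set.univ g
  g_nonneg : ∀ x, 0 ≤ g x
  omega_nonempty : ∃ x, g x ≠ 0
  zeta_nonneg : ∀ x, f x ≠ ⊤ → 0 ≤ zeta f h x

/-- `x` is a critical point of `F`: `0 ∈ ∂̂f(x) + ∇h(x) − F(x)·∂g(x)`. -/
def IsCritF [CompleteSpace E] (f : E → EReal) (g h : E → ℝ) (x : E) : Prop :=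
  g x ≠ 0 ∧ f x ≠ ⊤ ∧
  ∃ u ∈ frSubdiff f x, ∃ v ∈ cvxSubdiff g x,
    u + gradient h x - (Ffun f g h x).toReal • v = 0

/-- The level set `X = {x : F(x) ≤ F(x⁰)}`. -/
def lvlSet (f : E → EReal) (g h : E → ℝ) (x0 : E) : Set E :=
  {x | Ffun f g h x ≤ Ffun f g h x0}

/-- The enlargement `X_{α̲}` of the level set. -/
def Xal (f : E → EReal) (g h : E → ℝ) (x0 : E) (αl : ℝ) : Set E :=
  {z | (Metric.infDist z (lvlSet f g h x0)) ^ 2 ≤ sSup (g '' lvlSet f g h x0) / αl}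

/-- The compact set `𝒴 = ∪_{z ∈ X_{α̲}} ∂g(z)`. -/
def Yset (f : E → EReal) (g h : E → ℝ) (x0 : E) (αl : ℝ) : Set E :=
  ⋃ z ∈ Xal f g h x0 αl, cvxSubdiff g z

/-- The set `S = {(x,y) ∈ X × 𝒴 : η(x,y) > 0}`. -/
def Sset (f : E → EReal) (g h : E → ℝ) (x0 : E) (αl : ℝ) : Set (E × E) :=
  {p | p.1 ∈ lvlSet f g h x0 ∧ p.2 ∈ Yset f g h x0 αl ∧ 0 < eta g p.1 p.2}

/-- The set of accumulation points of a sequence. -/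
def accSet {X : Type*} [TopologicalSpace X] (pt : ℕ → X) : Set X :=
  {p | ∃ σ : ℕ → ℕ, StrictMono σ ∧ Tendsto (pt ∘ σ) atTop (𝓝 p)}

/-- A polyhedral function: its epigraph is a finite intersection of closed half-spaces. -/
def IsPolyhedralFn (φ : E → EReal) : Prop :=
  ∃ (m : ℕ) (w : Fin m → E) (c b : Fin m → ℝ),
    ∀ (x : E) (a : ℝ), (φ x ≤ (a : EReal) ↔ ∀ i, ⟪w i, x⟫ + c i * a ≤ b i)



/-! ### Auxiliary lemmas -/

private lemma ereal_mul_nonneg {a : EReal} {t : ℝ} (ha : 0 ≤ a) (ht : 0 ≤ t) :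
    (0 : EReal) ≤ a * (t : EReal) := by
  induction a using EReal.rec with
  | bot => exact absurd ha (by simp)
  | coe x =>
      rw [← EReal.coe_mul]
      exact EReal.coe_nonneg.2 (mul_nonneg (EReal.coe_nonneg.1 ha) ht)
  | top =>
      rcases eq_or_lt_of_le ht with h | h
      · rw [← h]; simp
      · rw [EReal.top_mul_coe_of_pos h]; exact le_top

private lemma ereal_aux1 {N : EReal} {b t : ℝ} (ht : 0 < t) (h : ((b * t : ℝ) : EReal) ≤ N) :
    (b : EReal) ≤ N * ((t⁻¹ : ℝ) : EReal) := by
  induction N using EReal.rec with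
  | bot => exact absurd (le_bot_iff.1 h) (EReal.coe_ne_bot _)
  | coe x =>
      rw [← EReal.coe_mul, EReal.coe_le_coe_iff] at *
      rw [← mul_inv_cancel_right₀ (ne_of_gt ht) b]
      exact mul_le_mul_of_nonneg_right h (inv_nonneg.2 ht.le)
  | top =>
      rw [EReal.top_mul_coe_of_pos (inv_pos.2 ht)]
      exact le_top

private lemma ereal_aux2 {N : EReal} {b t : ℝ} (ht : 0 < t)
    (h : (b : EReal) < N * ((t⁻¹ : ℝ) : EReal)) : ((b * t : ℝ) : EReal) ≤ N := by
  induction N using EReal.rec with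
  | bot => rw [EReal.bot_mul_coe_of_pos (inv_pos.2 ht)] at h; exact absurd h (by simp)
  | coe x =>
      rw [← EReal.coe_mul, EReal.coe_lt_coe_iff] at h
      rw [EReal.coe_le_coe_iff]
      have := mul_le_mul_of_nonneg_right h.le ht.le
      rwa [mul_assoc, inv_mul_cancel₀ (ne_of_gt ht), mul_one] at this
  | top => exact le_top

private lemma ereal_le_of_forall_lt {L : EReal}
    (h : ∀ b : ℝ, b < 0 → (b : EReal) ≤ L) : 0 ≤ L := by
  by_contra hc
  push_neg at hc
  obtain ⟨b, hLb, hb0⟩ := exists_between hc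
  induction b using EReal.rec with
  | bot => exact absurd hLb (by simp)
  | coe x => exact absurd (h x (EReal.coe_lt_coe_iff.1 (by exact_mod_cast hb0))) (not_le.2 hLb)
  | top => exact absurd hb0 (by simp)

/-! ### Fenchel conjugate facts -/

lemma fenchel_young (g : E → ℝ) (x y : E) :
    ((⟪x, y⟫ : ℝ) : EReal) - ((g x : ℝ) : EReal) ≤ fconj g y :=
  le_iSup (fun x' : E => (((⟪x', y⟫ : ℝ) : EReal) - ((g x' : ℝ) : EReal))) x

lemma eta_le_g (g : E → ℝ) (x y : E) : eta g x y ≤ ((g x : ℝ) : EReal) := by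
  have h := EReal.sub_le_sub (le_refl ((⟪x, y⟫ : ℝ) : EReal)) (fenchel_young g x y)
  refine h.trans ?_
  rw [show ((⟪x, y⟫ : ℝ) : EReal) - (((⟪x, y⟫ : ℝ) : EReal) - ((g x : ℝ) : EReal))
      = ((⟪x, y⟫ - (⟪x, y⟫ - g x) : ℝ) : EReal) by rw [EReal.coe_sub, EReal.coe_sub]]
  rw [show (⟪x, y⟫ - (⟪x, y⟫ - g x) : ℝ) = g x by ring]

lemma fconj_of_subgrad {g : E → ℝ} {x y : E} (hy : y ∈ cvxSubdiff g x) :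
    fconj g y = ((⟪x, y⟫ - g x : ℝ) : EReal) := by
  refine le_antisymm (iSup_le fun x' => ?_) ?_
  · rw [show (((⟪x', y⟫ : ℝ) : EReal) - ((g x' : ℝ) : EReal)) = ((⟪x', y⟫ - g x' : ℝ) : EReal)
      from (EReal.coe_sub _ _).symm, EReal.coe_le_coe_iff]
    have h := hy x'
    have hinner : ⟪y, x' - x⟫ = ⟪x', y⟫ - ⟪x, y⟫ := by
      rw [inner_sub_right, real_inner_comm y x', real_inner_comm y x]
    linarith
  · have := fenchel_young g x y
    rwa [show (((⟪x, y⟫ : ℝ) : EReal) - ((g x : ℝ) : EReal)) = ((⟪x, y⟫ - g x : ℝ) : EReal)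
      from (EReal.coe_sub _ _).symm] at this

lemma eta_of_subgrad {g : E → ℝ} {x y : E} (hy : y ∈ cvxSubdiff g x) :
    eta g x y = ((g x : ℝ) : EReal) := by
  rw [eta, fconj_of_subgrad hy, ← EReal.coe_sub]
  norm_num

/-! ### Basic facts about `Ffun` and `Qfun` -/

lemma Ffun_ne_bot (f : E → EReal) (g h : E → ℝ) (x : E) : Ffun f g h x ≠ ⊥ := by
  rw [Ffun]; split
  · exact EReal.coe_ne_bot _
  · simp

lemma zeta_toReal_nonneg [CompleteSpace E] {f : E → EReal} {g h : E → ℝ}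
    (hb : Blanket f g h) {x : E} (hx : f x ≠ ⊤) : 0 ≤ (f x).toReal + h x := by
  have h1 := hb.zeta_nonneg x hx
  rw [zeta, ← EReal.coe_toReal hx (hb.f_proper.2 x), ← EReal.coe_add] at h1
  exact EReal.coe_nonneg.1 h1

lemma Ffun_le_Qfun [CompleteSpace E] {f : E → EReal} {g h : E → ℝ}
    (hb : Blanket f g h) (x y : E) : Ffun f g h x ≤ Qfun f g h x y := by
  rw [Qfun]
  by_cases hq : f x ≠ ⊤ ∧ 0 < eta g x y
  · rw [if_pos hq]
    obtain ⟨hfx, heta⟩ := hq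
    have hle := eta_le_g g x y
    have hgpos : 0 < g x := EReal.coe_pos.1 (lt_of_lt_of_le heta hle)
    have hetop : eta g x y ≠ ⊤ := (lt_of_le_of_lt hle (EReal.coe_lt_top _)).ne
    have hebot : eta g x y ≠ ⊥ := ne_bot_of_gt heta
    set t := (eta g x y).toReal with htdef
    have hecoe : eta g x y = (t : EReal) := (EReal.coe_toReal hetop hebot).symm
    have htpos : 0 < t := EReal.coe_pos.1 (hecoe ▸ heta)
    have htle : t ≤ g x := EReal.coe_le_coe_iff.1 (hecoe ▸ hle)
    rw [Ffun, if_pos ⟨ne_of_gt hgpos, hfx⟩, EReal.coe_le_coe_iff]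
    exact div_le_div_of_nonneg_left (zeta_toReal_nonneg hb hfx) htpos htle
  · rw [if_neg hq]; exact le_top

lemma Qfun_of_subgrad [CompleteSpace E] {f : E → EReal} {g h : E → ℝ}
    (hb : Blanket f g h) {x y : E} (hy : y ∈ cvxSubdiff g x) :
    Qfun f g h x y = Ffun f g h x := by
  rw [Qfun, Ffun, eta_of_subgrad hy]
  by_cases hfx : f x ≠ ⊤
  · by_cases hgx : g x ≠ 0
    · have hgpos : 0 < g x := lt_of_le_of_ne (hb.g_nonneg x) (Ne.symm hgx)
      rw [if_pos ⟨hfx, EReal.coe_pos.2 hgpos⟩, if_pos ⟨hgx, hfx⟩, EReal.toReal_coe]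
    · push_neg at hgx
      rw [if_neg (by simp [hgx]), if_neg (by simp [hgx])]
  · push_neg at hfx
    rw [if_neg (by simp [hfx]), if_neg (by simp [hfx])]

/-! ### Fréchet subdifferential transfer -/

lemma pr1_mk2 (x y : E) : pr1 (mk2 x y) = x := rfl
lemma pr2_mk2 (x y : E) : pr2 (mk2 x y) = y := rfl

lemma Qpair_mk2 (f : E → EReal) (g h : E → ℝ) (x y : E) :
    Qpair f g h (mk2 x y) = Qfun f g h x y := rfl

lemma fst_le_norm (q : WithLp 2 (E × E)) : ‖q.fst‖ ≤ ‖q‖ := by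
  have h2 := WithLp.prod_norm_sq_eq_of_L2 q
  nlinarith [norm_nonneg q, norm_nonneg q.fst, sq_nonneg ‖q.snd‖]

lemma fr_transfer [CompleteSpace E] {f : E → EReal} {g h : E → ℝ} (hb : Blanket f g h)
    {u y w : E} (hw : w ∈ frSubdiff (Ffun f g h) u) (hy : y ∈ cvxSubdiff g u) :
    mk2 w (0 : E) ∈ frSubdiff (Qpair f g h) (mk2 u y) := by
  obtain ⟨hFu, hlim⟩ := hw
  have hQ0 : Qpair f g h (mk2 u y) = Ffun f g h u := by
    rw [Qpair_mk2]; exact Qfun_of_subgrad hb hy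
  refine ⟨by rw [hQ0]; exact hFu, ?_⟩
  set p0 : WithLp 2 (E × E) := mk2 u y with hp0
  set r := (Ffun f g h u).toReal with hr
  have hFcoe : Ffun f g h u = (r : EReal) :=
    (EReal.coe_toReal hFu (Ffun_ne_bot f g h u)).symm
  apply ereal_le_of_forall_lt
  intro b hb0
  have hb0' : (b : EReal) < 0 := by exact_mod_cast hb0
  have hev : ∀ᶠ x in 𝓝[≠] u, (b : EReal) <
      (Ffun f g h x - Ffun f g h u - ((⟪w, x - u⟫ : ℝ) : EReal)) * ((‖x - u‖⁻¹ : ℝ) : EReal) :=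
    eventually_lt_of_lt_liminf (lt_of_lt_of_le hb0' hlim)
  rw [eventually_nhdsWithin_iff] at hev
  have hcont : Continuous (pr1 : WithLp 2 (E × E) → E) :=
    continuous_fst.comp (WithLp.prod_continuous_ofLp _ _ _)
  have hpr1p0 : pr1 p0 = u := rfl
  have hev2 : ∀ᶠ q in 𝓝 p0, (pr1 q ∈ ({u}ᶜ : Set E) → (b : EReal) <
      (Ffun f g h (pr1 q) - Ffun f g h u - ((⟪w, pr1 q - u⟫ : ℝ) : EReal))
        * ((‖pr1 q - u‖⁻¹ : ℝ) : EReal)) := by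
    have := (hcont.tendsto p0).eventually (hpr1p0 ▸ hev)
    exact this
  refine le_liminf_of_le (by isBoundedDefault) ?_
  rw [eventually_nhdsWithin_iff]
  filter_upwards [hev2] with q hq hqne
  have hqne' : q ≠ p0 := by simpa using hqne
  set x := pr1 q with hx
  have hfst : (q - p0).fst = x - u := by
    rw [WithLp.sub_fst]; rfl
  have hsnd : (q - p0).snd = pr2 q - y := by
    rw [WithLp.sub_snd]; rfl
  have hinner : (⟪mk2 w (0 : E), q - p0⟫ : ℝ) = ⟪w, x - u⟫ := by
    rw [WithLp.prod_inner_apply]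
    change ⟪(mk2 w (0 : E)).fst, (q - p0).fst⟫ + ⟪(mk2 w (0 : E)).snd, (q - p0).snd⟫ = _
    rw [hfst, hsnd]
    have h1 : (mk2 w (0 : E)).fst = w := rfl
    have h2 : (mk2 w (0 : E)).snd = (0 : E) := rfl
    rw [h1, h2, inner_zero_left, add_zero]
  set s := ‖q - p0‖ with hs
  have hspos : 0 < s := by
    rw [hs, norm_pos_iff]
    exact sub_ne_zero.2 hqne'
  have hnle : ‖x - u‖ ≤ s := by rw [hs, ← hfst]; exact fst_le_norm _
  have hQge : Ffun f g h x ≤ Qpair f g h q := Ffun_le_Qfun hb (pr1 q) (pr2 q)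
  have claim : ((b * s : ℝ) : EReal) ≤
      Qpair f g h q - Qpair f g h p0 - ((⟪mk2 w (0 : E), q - p0⟫ : ℝ) : EReal) := by
    have h1 : Ffun f g h x - (r : EReal) - ((⟪w, x - u⟫ : ℝ) : EReal) ≤
        Qpair f g h q - Qpair f g h p0 - ((⟪mk2 w (0 : E), q - p0⟫ : ℝ) : EReal) := by
      rw [hQ0, hFcoe, hinner]
      exact EReal.sub_le_sub (EReal.sub_le_sub hQge le_rfl) le_rfl
    by_cases hxu : x = u
    · refine le_trans ?_ h1
      rw [hxu, sub_self, inner_zero_right, hFcoe, ← EReal.coe_sub, ← EReal.coe_sub,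
        EReal.coe_le_coe_iff]
      nlinarith
    · have hbH := hq (by simpa using hxu)
      rw [hFcoe] at hbH
      have hnpos : 0 < ‖x - u‖ := norm_pos_iff.2 (sub_ne_zero.2 hxu)
      have h2 := ereal_aux2 hnpos hbH
      have h3 : b * s ≤ b * ‖x - u‖ :=
        mul_le_mul_of_nonpos_left hnle hb0.le
      exact (EReal.coe_le_coe_iff.2 h3).trans (h2.trans h1)
  exact ereal_aux1 hspos claim

/-! ### Convex subdifferential facts -/

lemma cvx_continuous [FiniteDimensional ℝ E] {g : E → ℝ} (hg : ConvexOn ℝ univ g) :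
    Continuous g := by
  rw [← continuousOn_univ]
  exact hg.continuousOn isOpen_univ

lemma cvxSubdiff_nonempty [FiniteDimensional ℝ E] [CompleteSpace E] {g : E → ℝ}
    (hg : ConvexOn ℝ univ g) (u : E) : (cvxSubdiff g u).Nonempty := by
  have hgc : Continuous g := cvx_continuous hg
  set S : Set (E × ℝ) := {p | g p.1 < p.2} with hS
  have hSopen : IsOpen S := isOpen_lt (hgc.comp continuous_fst) continuous_snd
  have hSconv : Convex ℝ S := by
    have h := hg.convex_strict_epigraph
    convert h using 1
    ext p; simp [hS]
  have hnS : (u, g u) ∉ S := by simp [hS]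
  obtain ⟨φ, hφ⟩ := geometric_hahn_banach_open_point hSconv hSopen hnS
  have hsplit : ∀ (x : E) (t : ℝ), φ (x, t) = φ (x, 0) + t * φ (0, 1) := by
    intro x t
    have hxt : (x, t) = (x, (0 : ℝ)) + t • ((0 : E), (1 : ℝ)) := by
      simp [Prod.ext_iff]
    rw [hxt, map_add, map_smul, smul_eq_mul]
  have hkey0 : φ (u, g u + 1) < φ (u, g u) := hφ _ (by simp [hS])
  have hφ01 : φ ((0 : E), (1 : ℝ)) < 0 := by
    have h1 := hsplit u (g u + 1)
    have h2 := hsplit u (g u)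
    nlinarith [hkey0]
  set β : ℝ := -φ ((0 : E), (1 : ℝ)) with hβ
  have hβpos : 0 < β := by simp only [hβ]; linarith
  have key : ∀ x, φ (x, 0) - β * g x ≤ φ (u, 0) - β * g u := by
    intro x
    have hfa : ∀ s : ℝ, 0 < s → φ (x, 0) - β * g x ≤ φ (u, 0) - β * g u + s * β := by
      intro s hs
      have h3 := hφ (x, g x + s) (by simp [hS, hs])
      rw [hsplit x (g x + s), hsplit u (g u)] at h3
      have hb' : φ ((0 : E), (1 : ℝ)) = -β := by rw [hβ]; ring
      rw [hb'] at h3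
      nlinarith
    refine le_of_forall_pos_le_add ?_
    intro ε hε
    have h4 := hfa (ε / β) (div_pos hε hβpos)
    rwa [div_mul_cancel₀ _ hβpos.ne'] at h4
  set ψ : E →L[ℝ] ℝ := β⁻¹ • (φ.comp (ContinuousLinearMap.inl ℝ E ℝ)) with hψ
  refine ⟨(InnerProductSpace.toDual ℝ E).symm ψ, fun z => ?_⟩
  have hip : ⟪(InnerProductSpace.toDual ℝ E).symm ψ, z - u⟫ = ψ (z - u) :=
    InnerProductSpace.toDual_symm_apply
  rw [hip]
  have hψ' : ψ (z - u) = β⁻¹ * φ (z - u, 0) := by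
    simp [hψ, ContinuousLinearMap.comp_apply, ContinuousLinearMap.inl_apply]
  have hlin : φ ((z : E) - u, (0 : ℝ)) = φ (z, 0) - φ (u, 0) := by
    rw [← map_sub]
    congr 1
    simp [Prod.ext_iff]
  have h5 := key z
  have h6 := mul_le_mul_of_nonneg_left h5 (inv_nonneg.2 hβpos.le)
  have hββ : β⁻¹ * β = 1 := inv_mul_cancel₀ hβpos.ne'
  rw [hψ', hlin]
  have h7 : φ (z, 0) - φ (u, 0) ≤ (g z - g u) * β := by nlinarith [h5]
  have h8 : (φ (z, 0) - φ (u, 0)) / β ≤ g z - g u := (div_le_iff₀ hβpos).2 h7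
  rw [inv_mul_eq_div]
  linarith

lemma cvxSubdiff_bound [FiniteDimensional ℝ E] {g : E → ℝ}
    (hg : ConvexOn ℝ univ g) (z : E) :
    ∃ r > 0, ∃ L : ℝ, 0 ≤ L ∧ ∀ u ∈ Metric.ball z r, ∀ y ∈ cvxSubdiff g u, ‖y‖ ≤ L := by
  have hll : LocallyLipschitzOn univ g := hg.locallyLipschitzOn isOpen_univ
  obtain ⟨K, t, ht, hK⟩ := hll (mem_univ z)
  rw [nhdsWithin_univ] at ht
  obtain ⟨r, hr, hball⟩ := Metric.mem_nhds_iff.1 ht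
  refine ⟨r / 3, by positivity, K, K.2, ?_⟩
  intro u hu y hy
  have hineq : ∀ v : E, ‖v‖ ≤ r / 3 → ⟪y, v⟫ ≤ K * ‖v‖ := by
    intro v hv
    have h1 := hy (u + v)
    rw [add_sub_cancel_left] at h1
    have hmem1 : u ∈ Metric.ball z r := by
      rw [Metric.mem_ball] at hu ⊢
      linarith
    have hmem2 : u + v ∈ Metric.ball z r := by
      rw [Metric.mem_ball] at hu ⊢
      calc dist (u + v) z ≤ dist (u + v) u + dist u z := dist_triangle _ _ _
        _ = ‖v‖ + dist u z := by rw [dist_self_add_left]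
        _ < r := by linarith
    have h2 := hK.dist_le_mul (u + v) (hball hmem2) u (hball hmem1)
    rw [dist_self_add_left, Real.dist_eq] at h2
    have h3 : g (u + v) - g u ≤ K * ‖v‖ := (le_abs_self _).trans h2
    linarith
  by_cases hy0 : y = 0
  · simp [hy0]
  · have hny : 0 < ‖y‖ := norm_pos_iff.2 hy0
    set c : ℝ := (r / 3) / ‖y‖ with hc
    have hcpos : 0 < c := by positivity
    have hnv : ‖c • y‖ = r / 3 := by
      rw [norm_smul, Real.norm_eq_abs, abs_of_pos hcpos, hc, div_mul_cancel₀ _ hny.ne']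
    have h4 := hineq (c • y) (le_of_eq hnv)
    rw [real_inner_smul_right, real_inner_self_eq_norm_sq, hnv] at h4
    have h5 : c * ‖y‖ = r / 3 := by rw [hc, div_mul_cancel₀ _ hny.ne']
    nlinarith [h4, hcpos, hny]

lemma cvxSubdiff_closed_graph [FiniteDimensional ℝ E] {g : E → ℝ}
    (hg : ConvexOn ℝ univ g) {u y : ℕ → E} {z yh : E}
    (hu : Tendsto u atTop (𝓝 z)) (hy : Tendsto y atTop (𝓝 yh))
    (hmem : ∀ k, y k ∈ cvxSubdiff g (u k)) : yh ∈ cvxSubdiff g z := by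
  intro x
  have hgc := cvx_continuous hg
  have h1 : Tendsto (fun k => g (u k) + ⟪y k, x - u k⟫) atTop (𝓝 (g z + ⟪yh, x - z⟫)) :=
    ((hgc.tendsto z).comp hu).add (hy.inner (tendsto_const_nhds.sub hu))
  exact le_of_tendsto h1 (Eventually.of_forall fun k => hmem k x)

lemma cvxSubdiff_isCompact [FiniteDimensional ℝ E] {g : E → ℝ}
    (hg : ConvexOn ℝ univ g) (x : E) : IsCompact (cvxSubdiff g x) := by
  obtain ⟨r, hr, L, hL0, hLb⟩ := cvxSubdiff_bound hg x
  refine Metric.isCompact_of_isClosed_isBounded ?_ ?_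
  · have : cvxSubdiff g x = ⋂ z : E, {y | g x + ⟪y, z - x⟫ ≤ g z} := by
      ext y; simp [cvxSubdiff, mem_iInter]
    rw [this]
    exact isClosed_iInter fun z =>
      isClosed_le (continuous_const.add (continuous_id.inner continuous_const)) continuous_const
  · rw [Metric.isBounded_iff_subset_closedBall 0]
    exact ⟨L, fun y hy => by
      rw [Metric.mem_closedBall, dist_zero_right]
      exact hLb x (Metric.mem_ball_self hr) y hy⟩

lemma cvxSubdiff_osc [FiniteDimensional ℝ E] {g : E → ℝ}
    (hg : ConvexOn ℝ univ g) (xb : E) {rho : ℝ} (hrho : 0 < rho) :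
    ∃ d > 0, ∀ z ∈ Metric.ball xb d, ∀ y ∈ cvxSubdiff g z,
      ∃ y0 ∈ cvxSubdiff g xb, dist y y0 < rho := by
  by_contra hcon
  push_neg at hcon
  obtain ⟨r, hr, L, hL0, hLb⟩ := cvxSubdiff_bound hg xb
  have hsel : ∀ k : ℕ, ∃ z ∈ Metric.ball xb (min r (1 / (k + 1 : ℝ))),
      ∃ y ∈ cvxSubdiff g z, ∀ y0 ∈ cvxSubdiff g xb, rho ≤ dist y y0 := by
    intro k
    obtain ⟨z, hz, y, hy, hfar⟩ := hcon (min r (1 / (k + 1 : ℝ))) (by positivity)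
    exact ⟨z, hz, y, hy, hfar⟩
  choose zs hzs ys hys hfar using hsel
  have hzs_tendsto : Tendsto zs atTop (𝓝 xb) := by
    rw [tendsto_iff_dist_tendsto_zero]
    refine squeeze_zero (fun k => dist_nonneg) (fun k => ?_)
      tendsto_one_div_add_atTop_nhds_zero_nat
    exact le_of_lt (lt_of_lt_of_le (Metric.mem_ball.1 (hzs k)) (min_le_right _ _))
  have hbd : ∀ k, ys k ∈ Metric.closedBall (0 : E) L := fun k => by
    rw [Metric.mem_closedBall, dist_zero_right]
    exact hLb (zs k) (Metric.mem_ball.2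
      (lt_of_lt_of_le (Metric.mem_ball.1 (hzs k)) (min_le_left _ _))) (ys k) (hys k)
  obtain ⟨yh, -, sigma, hsigma, hconv⟩ :=
    tendsto_subseq_of_bounded Metric.isBounded_closedBall hbd
  have hyh : yh ∈ cvxSubdiff g xb :=
    cvxSubdiff_closed_graph hg (hzs_tendsto.comp hsigma.tendsto_atTop) hconv
      (fun k => hys (sigma k))
  have hdist : Tendsto (fun k => dist ((ys ∘ sigma) k) yh) atTop (𝓝 0) :=
    tendsto_iff_dist_tendsto_zero.1 hconv
  have hge := ge_of_tendsto hdist (Eventually.of_forall fun k => hfar (sigma k) yh hyh)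
  linarith

/-! ### Limiting subdifferential transfer -/

lemma lim_transfer [FiniteDimensional ℝ E] [CompleteSpace E] {f : E → EReal} {g h : E → ℝ}
    (hb : Blanket f g h) {z w : E} (hw : w ∈ limSubdiff (Ffun f g h) z) :
    ∃ yh ∈ cvxSubdiff g z, mk2 w (0 : E) ∈ limSubdiff (Qpair f g h) (mk2 z yh) := by
  obtain ⟨u, v, hu, hFu, hv, hvw⟩ := hw
  choose ys hys using fun k => cvxSubdiff_nonempty hb.g_convex (u k)
  obtain ⟨r, hr, L, hL0, hLb⟩ := cvxSubdiff_bound hb.g_convex z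
  obtain ⟨k0, hk0⟩ := (Filter.eventually_atTop.1 (hu (Metric.ball_mem_nhds z hr)))
  have hbd : ∀ k : ℕ, ys (k + k0) ∈ Metric.closedBall (0 : E) L := fun k => by
    rw [Metric.mem_closedBall, dist_zero_right]
    exact hLb (u (k + k0)) (hk0 _ (Nat.le_add_left _ _)) _ (hys (k + k0))
  obtain ⟨yh, -, sigma, hsigma, hconv⟩ :=
    tendsto_subseq_of_bounded Metric.isBounded_closedBall hbd
  set tau : ℕ → ℕ := fun k => sigma k + k0 with htau
  have htauSM : StrictMono tau := fun a b hab => by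
    simp only [htau]
    exact Nat.add_lt_add_right (hsigma hab) k0
  have htauT : Tendsto tau atTop atTop := htauSM.tendsto_atTop
  have hyconv : Tendsto (fun k => ys (tau k)) atTop (𝓝 yh) := hconv
  have hyh : yh ∈ cvxSubdiff g z :=
    cvxSubdiff_closed_graph hb.g_convex (hu.comp htauT) hyconv (fun k => hys (tau k))
  refine ⟨yh, hyh, fun k => mk2 (u (tau k)) (ys (tau k)), fun k => mk2 (v (tau k)) 0,
    ?_, ?_, ?_, ?_⟩
  · have hpair : Tendsto (fun k => (u (tau k), ys (tau k))) atTop (𝓝 (z, yh)) :=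
      (hu.comp htauT).prodMk_nhds hyconv
    exact ((WithLp.prod_continuous_toLp 2 E E).tendsto (z, yh)).comp hpair
  · have heq : (fun k => Qpair f g h (mk2 (u (tau k)) (ys (tau k))))
        = fun k => Ffun f g h (u (tau k)) := funext fun k => by
      rw [Qpair_mk2]; exact Qfun_of_subgrad hb (hys (tau k))
    rw [heq, Qpair_mk2, Qfun_of_subgrad hb hyh]
    exact hFu.comp htauT
  · exact fun k => fr_transfer hb (hv (tau k)) (hys (tau k))
  · have hpair : Tendsto (fun k => (v (tau k), (0 : E))) atTop (𝓝 (w, 0)) :=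
      (hvw.comp htauT).prodMk_nhds tendsto_const_nhds
    exact ((WithLp.prod_continuous_toLp 2 E E).tendsto (w, 0)).comp hpair

/-- Transfer of the KL exponent from `Q` to `F`. -/
theorem statement7 {n : ℕ} (f : EuclideanSpace ℝ (Fin n) → EReal)
    (g h : EuclideanSpace ℝ (Fin n) → ℝ) (hb : Blanket f g h)
    (θ : ℝ) (hθ0 : 0 ≤ θ) (hθ1 : θ < 1)
    (xb : EuclideanSpace ℝ (Fin n))
    (hxb : (limSubdiff (Ffun f g h) xb).Nonempty)
    (hcalm : CalmOn (fconj g) (edom (fconj g)))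
    (hKL : ∀ yb ∈ cvxSubdiff g xb, KLExpAt (Qpair f g h) (mk2 xb yb) θ) :
    KLExpAt (Ffun f g h) xb θ := by
  classical
  by_cases hFtop : Ffun f g h xb = ⊤
  · exact ⟨1, one_pos, 1, one_pos, 1, one_pos,
      fun z hz hlt _ => absurd (hFtop ▸ hlt) not_top_lt⟩
  set F := Ffun f g h with hF
  set K := cvxSubdiff g xb with hK
  have hKcomp : IsCompact K := cvxSubdiff_isCompact hb.g_convex xb
  have hKne : K.Nonempty := cvxSubdiff_nonempty hb.g_convex xb
  choose c hc ε hε δ hδ H using fun yb : K => hKL yb yb.2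
  have hcover : K ⊆ ⋃ yb : K, Metric.ball (yb : _) (δ yb / 4) := fun y hy =>
    mem_iUnion.2 ⟨⟨y, hy⟩, Metric.mem_ball_self (by have := hδ ⟨y, hy⟩; positivity)⟩
  obtain ⟨T, hT⟩ := hKcomp.elim_finite_subcover _ (fun yb => Metric.isOpen_ball) hcover
  have hTne : T.Nonempty := by
    obtain ⟨y0, hy0⟩ := hKne
    obtain ⟨i, hi⟩ := mem_iUnion.1 (hT hy0)
    obtain ⟨hiT, _⟩ := mem_iUnion.1 hi
    exact ⟨i, hiT⟩
  set c0 := T.inf' hTne c with hc0def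
  set ε0 := T.inf' hTne ε with hε0def
  set ρ := T.inf' hTne (fun i => δ i / 4) with hρdef
  set δ1 := T.inf' hTne (fun i => δ i / 2) with hδ1def
  have hc0 : 0 < c0 := (Finset.lt_inf'_iff hTne).2 fun i _ => hc i
  have hε0 : 0 < ε0 := (Finset.lt_inf'_iff hTne).2 fun i _ => hε i
  have hρ : 0 < ρ := (Finset.lt_inf'_iff hTne).2 fun i _ => by have := hδ i; positivity
  have hδ1 : 0 < δ1 := (Finset.lt_inf'_iff hTne).2 fun i _ => by have := hδ i; positivity
  obtain ⟨d, hd, hosc⟩ := cvxSubdiff_osc hb.g_convex xb hρ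
  refine ⟨c0, hc0, ε0, hε0, min d δ1, lt_min hd hδ1, ?_⟩
  intro z hz hlt hlt2
  -- F xb and F z are finite reals
  have hFxb_bot : F xb ≠ ⊥ := Ffun_ne_bot f g h xb
  set a := (F xb).toReal with ha
  have hacoe : F xb = (a : EReal) := (EReal.coe_toReal hFtop hFxb_bot).symm
  have hFz_top : F z ≠ ⊤ := by
    intro hcon
    rw [hcon, hacoe, ← EReal.coe_add] at hlt2
    exact absurd hlt2 (by simp)
  set bb := (F z).toReal with hbb
  have hbcoe : F z = (bb : EReal) := (EReal.coe_toReal hFz_top (Ffun_ne_bot f g h z)).symm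
  have htpos : 0 < bb - a := by
    have := hlt
    rw [hacoe, hbcoe, EReal.coe_lt_coe_iff] at this
    linarith
  refine EMetric.le_infEdist.2 fun w hw => ?_
  obtain ⟨yh, hyh, hmem⟩ := lim_transfer hb hw
  have hzd : z ∈ Metric.ball xb d :=
    Metric.mem_ball.2 (lt_of_lt_of_le (Metric.mem_ball.1 hz) (min_le_left _ _))
  obtain ⟨y0, hy0K, hy0close⟩ := hosc z hzd yh hyh
  obtain ⟨i, hi⟩ := mem_iUnion.1 (hT hy0K)
  obtain ⟨hiT, hy0i⟩ := mem_iUnion.1 hi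
  have hρi : ρ ≤ δ i / 4 := Finset.inf'_le _ hiT
  have hyi : dist yh (i : _) < δ i / 2 := by
    have h1 := Metric.mem_ball.1 hy0i
    calc dist yh (i : _) ≤ dist yh y0 + dist y0 (i : _) := dist_triangle _ _ _
      _ < ρ + δ i / 4 := by linarith [hy0close, h1]
      _ ≤ δ i / 2 := by linarith [hρi]
  have hzi : dist z xb < δ i / 2 := by
    have h1 := lt_of_lt_of_le (Metric.mem_ball.1 hz) (min_le_right _ _)
    exact lt_of_lt_of_le h1 (Finset.inf'_le _ hiT)
  -- membership in the product ball
  have hq : mk2 z yh ∈ Metric.ball (mk2 xb (i : _)) (δ i) := by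
    rw [Metric.mem_ball, dist_eq_norm]
    have hsub : mk2 z yh - mk2 xb (i : _) = mk2 (z - xb) (yh - (i : _)) := by
      rfl
    rw [hsub, WithLp.prod_norm_eq_of_L2]
    have hfst : (mk2 (z - xb) (yh - (i : _))).fst = z - xb := rfl
    have hsnd : (mk2 (z - xb) (yh - (i : _))).snd = yh - (i : _) := rfl
    rw [hfst, hsnd, Real.sqrt_lt' (hδ i)]
    rw [dist_eq_norm] at hzi hyi
    nlinarith [norm_nonneg (z - xb), norm_nonneg (yh - (i : _)), hzi, hyi, hδ i]
  have hQz : Qpair f g h (mk2 z yh) = F z := by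
    rw [Qpair_mk2]; exact Qfun_of_subgrad hb hyh
  have hQx : Qpair f g h (mk2 xb (i : _)) = F xb := by
    rw [Qpair_mk2]; exact Qfun_of_subgrad hb i.2
  have h1 : Qpair f g h (mk2 xb (i : _)) < Qpair f g h (mk2 z yh) := by
    rw [hQz, hQx]; exact hlt
  have h2 : Qpair f g h (mk2 z yh) < Qpair f g h (mk2 xb (i : _)) + ((ε i : ℝ) : EReal) := by
    rw [hQz, hQx]
    refine hlt2.trans_le (add_le_add_right (EReal.coe_le_coe_iff.2 (Finset.inf'_le _ hiT)) _)
  have hKLi := H i (mk2 z yh) hq h1 h2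
  rw [hQz, hQx] at hKLi
  have hmono : ENNReal.ofReal (c0 * ((F z).toReal - (F xb).toReal) ^ θ) ≤
      ENNReal.ofReal (c i * ((F z).toReal - (F xb).toReal) ^ θ) := by
    refine ENNReal.ofReal_le_ofReal ?_
    have hpow : 0 ≤ ((F z).toReal - (F xb).toReal) ^ θ := by
      rw [← hbb, ← ha]
      exact Real.rpow_nonneg htpos.le θ
    exact mul_le_mul_of_nonneg_right (Finset.inf'_le _ hiT) hpow
  refine (hmono.trans (hKLi.trans ?_))
  refine (EMetric.infEdist_le_edist_of_mem hmem).trans ?_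
  have hnorm : ‖mk2 w (0 : EuclideanSpace ℝ (Fin n))‖ = ‖w‖ :=
    WithLp.norm_toLp_fst 2 _ _ w
  rw [edist_dist, edist_dist, dist_zero_left, dist_zero_left, hnorm]
end Paper
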